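/- Let n ≥ 1 be an integer and 0 < ε < π. Then ∫_0^ε (cos κ − cos ε)^{(n−2)/2} cos(nκ/2) dκ = 2^{−n/2} √π · (Γ(n/2)/Γ((n+1)/2)) · (sin ε)^{n−1}. -/

import Mathlib

open Real MeasureTheory Set intervalIntegral

namespace MehlerDirichletAux

lemma trig_id (b c x : ℝ) :
    b * (-Real.sin x) * (Real.sin (b*x + x) - c * Real.sin (b*x)) +
      ((Real.cos x - c) * ((b+1) * Real.cos (b*x + x) - c * (b * Real.cos (b*x))))
    = (2*b+1) * ((Real.cos x - c) * Real.cos (b*x + x)) - b * (1 - c^2) * Real.cos (b*x) := by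
  rw [Real.sin_add, Real.cos_add]
  linear_combination (-(b * Real.cos (b*x))) * Real.sin_sq_add_cos_sq x


lemma cos_half_eq (x : ℝ) : Real.cos x = 1 - 2 * Real.sin (x/2)^2 := by
  have h := Real.cos_two_mul (x/2)
  rw [show 2*(x/2) = x by ring] at h
  rw [h, Real.cos_sq']; ring


def P (n : ℕ) (ε : ℝ) : Prop :=
  IntervalIntegrable
      (fun κ : ℝ => (Real.cos κ - Real.cos ε) ^ (((n : ℝ) - 2) / 2) *
        Real.cos ((n : ℝ) * κ / 2)) MeasureTheory.volume 0 ε ∧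
  ∫ κ in (0 : ℝ)..ε,
        (Real.cos κ - Real.cos ε) ^ (((n : ℝ) - 2) / 2) * Real.cos ((n : ℝ) * κ / 2) =
      (2 : ℝ) ^ (-(n : ℝ) / 2) * Real.sqrt Real.pi *
        (Real.Gamma ((n : ℝ) / 2) / Real.Gamma (((n : ℝ) + 1) / 2)) *
        Real.sin ε ^ (n - 1)


lemma step (n : ℕ) (hn : 1 ≤ n) (ε : ℝ) (hε0 : 0 < ε) (hεπ : ε < Real.pi)
    (ih : P n ε) : P (n+2) ε := by
  obtain ⟨ihInt, ihVal⟩ := ih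
  have hn' : (1:ℝ) ≤ (n:ℝ) := by exact_mod_cast hn
  set b : ℝ := (n:ℝ)/2 with hbdef
  have hb : 0 < b := by rw [hbdef]; positivity
  -- normalize the integrand of P n
  have hc0 : ((n : ℝ) - 2) / 2 = b - 1 := by rw [hbdef]; ring
  have harg0 : ∀ κ : ℝ, (n : ℝ) * κ / 2 = b * κ := fun κ => by rw [hbdef]; ring
  simp only [hc0, harg0] at ihInt ihVal
  -- normalize the integrand of P (n+2)
  have hc2 : (((n+2 : ℕ) : ℝ) - 2) / 2 = b := by rw [hbdef]; push_cast; ring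
  have harg2 : ∀ κ : ℝ, ((n+2 : ℕ) : ℝ) * κ / 2 = b * κ + κ := fun κ => by
    rw [hbdef]; push_cast; ring
  set f2 : ℝ → ℝ := fun κ => (Real.cos κ - Real.cos ε) ^ b * Real.cos (b * κ + κ) with hf2
  set f0 : ℝ → ℝ := fun κ => (Real.cos κ - Real.cos ε) ^ (b-1) * Real.cos (b * κ) with hf0
  have hint2 : IntervalIntegrable f2 volume 0 ε := by
    apply Continuous.intervalIntegrable
    exact ((continuous_cos.sub continuous_const).rpow_const (fun x => Or.inr hb.le)).mul
      (Real.continuous_cos.comp ((continuous_const.mul continuous_id').add continuous_id'))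
  have hint0 : IntervalIntegrable f0 volume 0 ε := ihInt
  -- the antiderivative
  set A : ℝ → ℝ := fun κ => (Real.cos κ - Real.cos ε) ^ b *
      (Real.sin (b * κ + κ) - Real.cos ε * Real.sin (b * κ)) with hA
  set g : ℝ → ℝ := fun κ => (2*b+1) * f2 κ - (b * Real.sin ε ^ 2) * f0 κ with hg
  have hgint : IntervalIntegrable g volume 0 ε :=
    (hint2.const_mul _).sub (hint0.const_mul _)
  have hAcont : ContinuousOn A (Icc 0 ε) := by
    apply Continuous.continuousOn
    exact ((continuous_cos.sub continuous_const).rpow_const (fun x => Or.inr hb.le)).mul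
      (((Real.continuous_sin.comp ((continuous_const.mul continuous_id').add continuous_id'))).sub
        (continuous_const.mul (Real.continuous_sin.comp (continuous_const.mul continuous_id'))))
  have hAderiv : ∀ x ∈ Ioo (0:ℝ) ε, HasDerivAt A (g x) x := by
    intro x hx
    have hw : 0 < Real.cos x - Real.cos ε :=
      sub_pos.2 (Real.cos_lt_cos_of_nonneg_of_le_pi hx.1.le hεπ.le hx.2)
    have h1 : HasDerivAt (fun κ => Real.cos κ - Real.cos ε) (-Real.sin x) x :=
      (Real.hasDerivAt_cos x).sub_const _
    have h2 := h1.rpow_const (p := b) (Or.inl hw.ne')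
    have h3a : HasDerivAt (fun κ : ℝ => Real.sin (b*κ + κ)) (Real.cos (b*x+x) * (b+1)) x := by
      have h : HasDerivAt (fun κ : ℝ => b*κ + κ) (b + 1) x := by
        exact (((hasDerivAt_id' x).const_mul b).add (hasDerivAt_id' x)).congr_deriv (by ring)
      exact h.sin
    have h3b : HasDerivAt (fun κ : ℝ => Real.sin (b*κ)) (Real.cos (b*x) * b) x := by
      have h : HasDerivAt (fun κ : ℝ => b*κ) b x := by
        simpa using (hasDerivAt_id x).const_mul b
      exact h.sin
    have h3 : HasDerivAt (fun κ => Real.sin (b*κ+κ) - Real.cos ε * Real.sin (b*κ))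
        (Real.cos (b*x+x)*(b+1) - Real.cos ε * (Real.cos (b*x)*b)) x :=
      h3a.sub (h3b.const_mul _)
    have hAd := h2.mul h3
    refine hAd.congr_deriv ?_; symm
    have hwb : (Real.cos x - Real.cos ε) ^ b
        = (Real.cos x - Real.cos ε) ^ (b-1) * (Real.cos x - Real.cos ε) := by
      rw [← Real.rpow_add_one hw.ne' (b-1)]; norm_num
    rw [hg, hf2, hf0]
    simp only
    rw [hwb, Real.sin_sq, Real.sin_add, Real.cos_add]
    linear_combination (b * Real.cos (b*x) * (Real.cos x - Real.cos ε)^(b-1)) *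
      Real.sin_sq_add_cos_sq x
  have hFTC := integral_eq_sub_of_hasDeriv_right_of_le hε0.le hAcont
    (fun x hx => (hAderiv x hx).hasDerivWithinAt) hgint
  have hAε : A ε = 0 := by
    rw [hA]; simp [sub_self, Real.zero_rpow hb.ne']
  have hA0 : A 0 = 0 := by
    rw [hA]; simp
  rw [hAε, hA0, sub_zero] at hFTC
  rw [hg] at hFTC
  rw [intervalIntegral.integral_sub (hint2.const_mul _) (hint0.const_mul _),
    intervalIntegral.integral_const_mul, intervalIntegral.integral_const_mul] at hFTC
  have h2b1 : (2*b+1) = (n:ℝ) + 1 := by rw [hbdef]; ring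
  have hI2 : ∫ κ in (0:ℝ)..ε, f2 κ
      = (b * Real.sin ε ^ 2) * (∫ κ in (0:ℝ)..ε, f0 κ) / (2*b+1) := by
    have h2b1' : (2*b+1) ≠ 0 := by rw [h2b1]; positivity
    field_simp at hFTC ⊢
    linarith [hFTC]
  constructor
  · simp only [hc2, harg2]; exact hint2
  · simp only [hc2, harg2]
    rw [show (∫ κ in (0:ℝ)..ε, (Real.cos κ - Real.cos ε) ^ b * Real.cos (b * κ + κ))
        = ∫ κ in (0:ℝ)..ε, f2 κ from rfl, hI2, ihVal]
    -- Gamma recursions and powers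
    have hg1 : ((n + 2 : ℕ) : ℝ) / 2 = b + 1 := by rw [hbdef]; push_cast; ring
    have hg2 : (((n + 2 : ℕ) : ℝ) + 1) / 2 = ((n:ℝ)+1)/2 + 1 := by push_cast; ring
    have hgam1 : Real.Gamma (((n + 2 : ℕ) : ℝ) / 2) = b * Real.Gamma b := by
      rw [hg1, Real.Gamma_add_one hb.ne']
    have hgam2 : Real.Gamma ((((n + 2 : ℕ) : ℝ) + 1) / 2)
        = ((n:ℝ)+1)/2 * Real.Gamma (((n:ℝ)+1)/2) := by
      rw [hg2, Real.Gamma_add_one (by positivity)]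
    have hpow : (2:ℝ) ^ (-((n + 2 : ℕ) : ℝ) / 2) = (2:ℝ) ^ (-(n:ℝ)/2) * 2⁻¹ := by
      rw [show (-((n + 2 : ℕ) : ℝ) / 2) = -(n:ℝ)/2 + (-1) by push_cast; ring,
        Real.rpow_add two_pos, Real.rpow_neg_one]
    have hsin : Real.sin ε ^ (n + 2 - 1) = Real.sin ε ^ 2 * Real.sin ε ^ (n - 1) := by
      rw [← pow_add]; congr 1; omega
    rw [hgam1, hgam2, hpow, hsin]
    have hΓ1 : Real.Gamma (((n:ℝ)+1)/2) ≠ 0 := (Real.Gamma_pos_of_pos (by positivity)).ne'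
    have hn1 : ((n:ℝ)+1) ≠ 0 := by positivity
    rw [h2b1]
    field_simp

lemma base2 (ε : ℝ) (hε0 : 0 < ε) (hεπ : ε < Real.pi) : P 2 ε := by
  have hfun : (fun κ : ℝ => (Real.cos κ - Real.cos ε) ^ ((((2:ℕ) : ℝ) - 2) / 2) *
      Real.cos (((2:ℕ) : ℝ) * κ / 2)) = fun κ : ℝ => Real.cos κ := by
    funext κ
    rw [show ((((2:ℕ):ℝ)) - 2)/2 = 0 by norm_num, Real.rpow_zero, one_mul,
      show (((2:ℕ):ℝ)) * κ / 2 = κ by push_cast; ring]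
  constructor
  · rw [hfun]; exact Real.continuous_cos.intervalIntegrable 0 ε
  · rw [hfun, integral_cos, Real.sin_zero, sub_zero]
    have h32 : (((2:ℕ):ℝ) + 1)/2 = 1/2 + 1 := by push_cast; ring
    rw [h32, Real.Gamma_add_one (by norm_num : (1/2:ℝ) ≠ 0), Real.Gamma_one_half_eq,
      show ((2:ℕ):ℝ)/2 = 1 by push_cast; ring, Real.Gamma_one,
      show (-((2:ℕ):ℝ)/2) = -1 by push_cast; ring, Real.rpow_neg_one]
    have hπ : Real.sqrt Real.pi ≠ 0 := (Real.sqrt_pos.2 Real.pi_pos).ne'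
    rw [show (2:ℕ) - 1 = 1 by norm_num, pow_one]
    field_simp


lemma base1 (ε : ℝ) (hε0 : 0 < ε) (hεπ : ε < Real.pi) : P 1 ε := by
  set s : ℝ := Real.sin (ε/2) with hsdef
  have hs : 0 < s := Real.sin_pos_of_pos_of_lt_pi (by linarith) (by linarith [Real.pi_pos])
  have hc : (((1:ℕ) : ℝ) - 2) / 2 = -(2⁻¹ : ℝ) := by norm_num
  have harg : ∀ κ : ℝ, ((1:ℕ) : ℝ) * κ / 2 = κ / 2 := fun κ => by push_cast; ring
  set f : ℝ → ℝ := fun κ => (Real.cos κ - Real.cos ε) ^ (-(2⁻¹:ℝ)) * Real.cos (κ/2) with hf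
  set B : ℝ → ℝ := fun κ => Real.sqrt 2 * Real.arcsin (Real.sin (κ/2) / s) with hB
  have hsub : ∀ x : ℝ, Real.cos x - Real.cos ε = 2*(s^2 - Real.sin (x/2)^2) := by
    intro x
    rw [cos_half_eq x, cos_half_eq ε, hsdef]; ring
  have hBderiv : ∀ x ∈ Ioo (0:ℝ) ε, HasDerivAt B (f x) x := by
    intro x hx
    set u : ℝ := Real.sin (x/2) with hudef
    have hu0 : 0 < u := Real.sin_pos_of_pos_of_lt_pi (by linarith [hx.1])
      (by linarith [hx.2, Real.pi_pos])
    have hus : u < s := by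
      rw [hudef, hsdef]
      exact Real.sin_lt_sin_of_lt_of_le_pi_div_two (by linarith [hx.1, Real.pi_pos])
        (by linarith) (by linarith [hx.2])
    have hy1 : u / s < 1 := (div_lt_one hs).2 hus
    have hy0 : 0 < u / s := div_pos hu0 hs
    have harc := Real.hasDerivAt_arcsin (by linarith : u/s ≠ -1) (by linarith : u/s ≠ 1)
    have hinner : HasDerivAt (fun κ : ℝ => Real.sin (κ/2) / s)
        (Real.cos (x/2) * (1/2) / s) x := by
      exact (((hasDerivAt_id x).div_const 2).sin).div_const s
    have hcomp := (harc.comp x hinner).const_mul (Real.sqrt 2)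
    have hBd : HasDerivAt B
        (Real.sqrt 2 * (1 / Real.sqrt (1 - (u/s)^2) * (Real.cos (x/2) * (1/2) / s))) x := by
      simpa [hB, Function.comp] using hcomp
    convert hBd using 1
    have hq : 0 < s^2 - u^2 := by nlinarith
    have hQ : 0 < Real.sqrt (s^2 - u^2) := Real.sqrt_pos.2 hq
    have h1y : 1 - (u/s)^2 = (s^2 - u^2)/s^2 := by field_simp
    have hsq : Real.sqrt (1 - (u/s)^2) = Real.sqrt (s^2-u^2) / s := by
      rw [h1y, Real.sqrt_div hq.le, Real.sqrt_sq hs.le]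
    have hwx : Real.cos x - Real.cos ε = 2*(s^2 - u^2) := hsub x
    have hrpow : (Real.cos x - Real.cos ε) ^ (-(2⁻¹:ℝ))
        = (Real.sqrt 2 * Real.sqrt (s^2-u^2))⁻¹ := by
      rw [hwx, Real.rpow_neg (by positivity), ← Real.sqrt_mul (by norm_num : (0:ℝ) ≤ 2)]
      congr 1
      rw [Real.sqrt_eq_rpow]
      norm_num
    have h2 : Real.sqrt 2 * Real.sqrt 2 = 2 := Real.mul_self_sqrt (by norm_num)
    rw [hf]
    simp only
    rw [hrpow, hsq]
    have hs2 : Real.sqrt 2 ≠ 0 := by positivity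
    have h2' : Real.sqrt 2 ^ 2 = 2 := Real.sq_sqrt (by norm_num)
    field_simp
    linear_combination (-Real.cos (x/2)) * h2'
  have hBpos : ∀ x ∈ Ioo (0:ℝ) ε, 0 ≤ f x := by
    intro x hx
    have hw : 0 < Real.cos x - Real.cos ε :=
      sub_pos.2 (Real.cos_lt_cos_of_nonneg_of_le_pi hx.1.le hεπ.le hx.2)
    have : 0 ≤ Real.cos (x/2) := Real.cos_nonneg_of_mem_Icc
      ⟨by linarith [hx.1, Real.pi_pos], by linarith [hx.2]⟩
    exact mul_nonneg (Real.rpow_nonneg hw.le _) this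
  have hBcont : ContinuousOn B (Icc 0 ε) := by
    apply Continuous.continuousOn
    exact continuous_const.mul (Real.continuous_arcsin.comp
      ((Real.continuous_sin.comp (continuous_id'.div_const 2)).div_const s))
  have hint : IntervalIntegrable f volume 0 ε := by
    apply intervalIntegrable_deriv_of_nonneg (g := B)
    · rw [uIcc_of_le hε0.le]; exact hBcont
    · simpa [min_eq_left hε0.le, max_eq_right hε0.le] using hBderiv
    · simpa [min_eq_left hε0.le, max_eq_right hε0.le] using hBpos
  have hval := integral_eq_sub_of_hasDeriv_right_of_le hε0.le hBcont
    (fun x hx => (hBderiv x hx).hasDerivWithinAt) hint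
  have hBε : B ε = Real.sqrt 2 * (Real.pi/2) := by
    rw [hB]; simp only
    rw [← hsdef, div_self hs.ne', Real.arcsin_one]
  have hB0 : B 0 = 0 := by
    rw [hB]; simp
  rw [hBε, hB0, sub_zero] at hval
  constructor
  · simp only [hc, harg]; exact hint
  · simp only [hc, harg]
    rw [hval]
    rw [show (((1:ℕ):ℝ))/2 = 1/2 by norm_num, Real.Gamma_one_half_eq,
      show ((((1:ℕ):ℝ)) + 1)/2 = 1 by norm_num, Real.Gamma_one,
      show (-(((1:ℕ):ℝ))/2) = -(2⁻¹:ℝ) by norm_num,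
      Real.rpow_neg (by norm_num : (0:ℝ) ≤ 2),
      show ((2:ℝ)^(2⁻¹:ℝ)) = Real.sqrt 2 by rw [Real.sqrt_eq_rpow]; norm_num]
    have h2 : Real.sqrt 2 * Real.sqrt 2 = 2 := Real.mul_self_sqrt (by norm_num)
    have hππ : Real.sqrt Real.pi * Real.sqrt Real.pi = Real.pi :=
      Real.mul_self_sqrt Real.pi_pos.le
    have hs2 : Real.sqrt 2 ≠ 0 := by positivity
    rw [show (1:ℕ) - 1 = 0 by norm_num, pow_zero]
    rw [div_one, mul_one, mul_assoc, hππ]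
    field_simp
    linear_combination h2

lemma key (ε : ℝ) (hε0 : 0 < ε) (hεπ : ε < Real.pi) :
    ∀ m : ℕ, 1 ≤ m → P m ε := by
  intro m
  induction m using Nat.strong_induction_on with
  | _ m ih =>
    intro hm
    match m, hm, ih with
    | 1, _, _ => exact base1 ε hε0 hεπ
    | 2, _, _ => exact base2 ε hε0 hεπ
    | (k+3), _, ih => exact step (k+1) (by omega) ε hε0 hεπ (ih (k+1) (by omega) (by omega))

end MehlerDirichletAux

/-- For `n ≥ 1` and `0 < ε < π`, the Mehler–Dirichlet type integral
`∫_0^ε (cos κ - cos ε)^{(n-2)/2} cos(nκ/2) dκ` converges absolutely and equals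
`2^{-n/2} √π (Γ(n/2)/Γ((n+1)/2)) (sin ε)^{n-1}`. -/
theorem mehler_dirichlet_integral (n : ℕ) (hn : 1 ≤ n) (ε : ℝ) (hε0 : 0 < ε)
    (hεπ : ε < Real.pi) :
    IntervalIntegrable
      (fun κ : ℝ => (Real.cos κ - Real.cos ε) ^ (((n : ℝ) - 2) / 2) *
        Real.cos ((n : ℝ) * κ / 2)) MeasureTheory.volume 0 ε ∧
    ∫ κ in (0 : ℝ)..ε,
        (Real.cos κ - Real.cos ε) ^ (((n : ℝ) - 2) / 2) * Real.cos ((n : ℝ) * κ / 2) =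
      (2 : ℝ) ^ (-(n : ℝ) / 2) * Real.sqrt Real.pi *
        (Real.Gamma ((n : ℝ) / 2) / Real.Gamma (((n : ℝ) + 1) / 2)) *
        Real.sin ε ^ (n - 1) := by
  exact MehlerDirichletAux.key ε hε0 hεπ n hn
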